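/- Let (E_r, d_r) be a cohomological spectral sequence of modules over a ring R, and L : E_r^{p,q} → E_r^{p,q+2} a morphism of spectral sequences (commuting with all differentials). Suppose there is d ≥ 0 such that for all k ≥ 0 and all p, the map L^k : E_2^{p,d-k} → E_2^{p,d+k} is an isomorphism, and E_2^{p,q} = 0 for q < 0 or q > 2d. If one further assumes the primitive decomposition E_2^{p,q} = ⊕_{j≥0} L^j P^{p,q-2j} with P^{p,q} = ker(L^{d-q+1} : E_2^{p,q} → E_2^{p,2d-q+2}), then d_2 vanishes on E_2 (Deligne's Lefschetz degeneration criterion, first step). -/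

import Mathlib

/-- A first-quadrant cohomological spectral sequence of `ℚ`-vector spaces,
starting at the `E₂`-page.  `E r p q` is the `(p,q)` entry of the `r`-th page,
`d r` is the differential of bidegree `(r, 1-r)`, and `iso` identifies the
next page with the homology (kernel modulo image) of the previous one. -/
structure FQSS where
  E : ℕ → ℤ → ℤ → Type
  [ac : ∀ r p q, AddCommGroup (E r p q)]
  [mo : ∀ r p q, Module ℚ (E r p q)]
  d : ∀ r p q, E r p q →ₗ[ℚ] E r (p + r) (q + 1 - r)
  dd : ∀ r p q, (d r (p + r) (q + 1 - r)).comp (d r p q) = 0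
  fq : ∀ r p q, p < 0 ∨ q < 0 → Subsingleton (E r p q)
  iso : ∀ r p q,
    E (r + 1) (p + r) (q + 1 - r) ≃ₗ[ℚ]
      (↥(LinearMap.ker (d r (p + r) (q + 1 - r))) ⧸
        (Submodule.comap (LinearMap.ker (d r (p + r) (q + 1 - r))).subtype
          (LinearMap.range (d r p q))))

attribute [instance] FQSS.ac FQSS.mo


/-- Transport along an equality of the internal degree. -/
def FQSS.castQ (S : FQSS) (r : ℕ) (p : ℤ) {q q' : ℤ} (h : q = q') :
    S.E r p q →ₗ[ℚ] S.E r p q' := by subst h; exact LinearMap.id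

/-- The `k`-th iterate of a degree-`(0,2)` operator `L` on a page of a spectral
sequence. -/
def FQSS.Lpow (S : FQSS) (L : ∀ r p q, S.E r p q →ₗ[ℚ] S.E r p (q + 2)) (r : ℕ) :
    ∀ (k : ℕ) (p q : ℤ), S.E r p q →ₗ[ℚ] S.E r p (q + 2 * k)
  | 0, p, q => S.castQ r p (by push_cast; ring)
  | (k + 1), p, q =>
      (S.castQ r p (by push_cast; ring)).comp
        ((L r p (q + 2 * k)).comp (FQSS.Lpow S L r k p q))

-- aux lemmas
lemma FQSS.castQ_rfl (S : FQSS) (r : ℕ) (p q : ℤ) (x : S.E r p q) :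
    S.castQ r p rfl x = x := rfl

lemma FQSS.castQ_inj (S : FQSS) (r : ℕ) (p : ℤ) {q q' : ℤ} (h : q = q') :
    Function.Injective (S.castQ r p h) := by subst h; exact fun a b hh => hh

lemma FQSS.castQ_castQ (S : FQSS) (r : ℕ) (p : ℤ) {q1 q2 q3 : ℤ} (h : q1 = q2)
    (h' : q2 = q3) (x : S.E r p q1) :
    S.castQ r p h' (S.castQ r p h x) = S.castQ r p (h.trans h') x := by
  subst h h'; rfl

lemma FQSS.d_castQ (S : FQSS) (r : ℕ) (p : ℤ) {q q' : ℤ} (h : q = q') (x : S.E r p q) :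
    S.d r p q' (S.castQ r p h x)
      = S.castQ r (p + r) (by rw [h]) (S.d r p q x) := by subst h; rfl

lemma FQSS.L_castQ (S : FQSS) (L : ∀ r p q, S.E r p q →ₗ[ℚ] S.E r p (q + 2))
    (r : ℕ) (p : ℤ) {q q' : ℤ} (h : q = q') (x : S.E r p q) :
    L r p q' (S.castQ r p h x) = S.castQ r p (by rw [h]) (L r p q x) := by subst h; rfl

lemma FQSS.Lpow_succ (S : FQSS) (L : ∀ r p q, S.E r p q →ₗ[ℚ] S.E r p (q + 2))
    (r k : ℕ) (p q : ℤ) (x : S.E r p q) :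
    S.Lpow L r (k + 1) p q x
      = S.castQ r p (by push_cast; ring) (L r p (q + 2 * k) (S.Lpow L r k p q x)) := rfl

lemma FQSS.dLpow (S : FQSS) (L : ∀ r p q, S.E r p q →ₗ[ℚ] S.E r p (q + 2))
    (hLd : ∀ (r : ℕ) (p q : ℤ),
      (S.castQ r (p + r) (show q + 1 - r + 2 = q + 2 + 1 - r by push_cast; ring)).comp
          ((L r (p + r) (q + 1 - r)).comp (S.d r p q)) =
        (S.d r p (q + 2)).comp (L r p q)) :
    ∀ (j : ℕ) (r : ℕ) (p q : ℤ) (z : S.E r p q),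
      S.d r p (q + 2 * j) (S.Lpow L r j p q z)
        = S.castQ r (p + r) (by push_cast; ring)
            (S.Lpow L r j (p + r) (q + 1 - r) (S.d r p q z)) := by
  intro j
  induction j with
  | zero =>
    intro r p q z
    show S.d r p (q + 2 * 0) (S.castQ r p (by push_cast; ring) z) = _
    rw [S.d_castQ]
    show _ = S.castQ r (p + r) _ (S.castQ r (p + r) (by push_cast; ring) (S.d r p q z))
    rw [S.castQ_castQ]
  | succ k ih =>
    intro r p q z
    rw [S.Lpow_succ, S.d_castQ]
    have hc := congrFun (congrArg DFunLike.coe (hLd r p (q + 2 * k))) (S.Lpow L r k p q z)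
    simp only [LinearMap.comp_apply] at hc
    rw [← hc, ih r p q z, S.L_castQ, S.castQ_castQ, S.Lpow_succ, S.castQ_castQ, S.castQ_castQ]

lemma FQSS.Lpow_inj (S : FQSS) (d : ℕ) (L : ∀ r p q, S.E r p q →ₗ[ℚ] S.E r p (q + 2))
    (hHL : ∀ (k : ℕ) (p : ℤ), Function.Bijective
      ((S.castQ 2 p (show (d : ℤ) - k + 2 * k = d + k by push_cast; ring)).comp
        (S.Lpow L 2 k p ((d : ℤ) - k))))
    (k : ℕ) (p q : ℤ) (h : q = (d : ℤ) - k) :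
    Function.Injective (S.Lpow L 2 k p q) := by
  subst h
  have hi := (hHL k p).injective
  rw [LinearMap.coe_comp] at hi
  exact Function.Injective.of_comp hi


/-- Deligne's Lefschetz degeneration criterion, first step.  Let
`(E_r, d_r)` be a first-quadrant spectral sequence of `ℚ`-vector spaces with
`E₂^{p,q} = 0` for `q > 2d`, and `L` a morphism of spectral sequences of bidegree
`(0,2)`.  If `L^k : E₂^{p,d-k} → E₂^{p,d+k}` is an isomorphism for all `k ≥ 0`
and all `p` (hard Lefschetz on `E₂`), and `E₂` admits the primitive
decomposition `E₂^{p,q} = ⊕_{j≥0} L^j P^{p,q-2j}` with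
`P^{p,q} = ker (L^{d-q+1} : E₂^{p,q} → E₂^{p,2d-q+2})`, then `d₂ = 0`. -/
theorem stmt_2 (S : FQSS) (d : ℕ)
    -- `E₂` is concentrated in the rows `0 ≤ q ≤ 2d`
    (hbd : ∀ p q, 2 * (d : ℤ) < q → Subsingleton (S.E 2 p q))
    -- `L`, a morphism of spectral sequences of bidegree `(0,2)` ...
    (L : ∀ r p q, S.E r p q →ₗ[ℚ] S.E r p (q + 2))
    -- ... commuting with all the differentials
    (hLd : ∀ (r : ℕ) (p q : ℤ),
      (S.castQ r (p + r) (show q + 1 - r + 2 = q + 2 + 1 - r by push_cast; ring)).comp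
          ((L r (p + r) (q + 1 - r)).comp (S.d r p q)) =
        (S.d r p (q + 2)).comp (L r p q))
    -- hard Lefschetz on the `E₂` page: `L^k : E₂^{p,d-k} ≅ E₂^{p,d+k}`
    (hHL : ∀ (k : ℕ) (p : ℤ), Function.Bijective
      ((S.castQ 2 p (show (d : ℤ) - k + 2 * k = d + k by push_cast; ring)).comp
        (S.Lpow L 2 k p ((d : ℤ) - k))))
    -- the primitive decomposition of `E₂`, with
    -- `P^{p,q} = ker (L^{d-q+1} : E₂^{p,q} → E₂^{p,2d-q+2})`
    (hprim : ∀ (p q : ℤ), DirectSum.IsInternal (fun j : ℕ =>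
      Submodule.map
        ((S.castQ 2 p (show q - 2 * j + 2 * (j : ℤ) = q by push_cast; ring)).comp
          (S.Lpow L 2 j p (q - 2 * j)))
        (LinearMap.ker (S.Lpow L 2 (((d : ℤ) - (q - 2 * j) + 1).toNat) p (q - 2 * j))))) :
    ∀ p q, S.d 2 p q = 0 := by
  intro p q
  ext x
  rw [LinearMap.zero_apply]
  have hx : x ∈ ⨆ j : ℕ, Submodule.map
        ((S.castQ 2 p (show q - 2 * j + 2 * (j : ℤ) = q by push_cast; ring)).comp
          (S.Lpow L 2 j p (q - 2 * j)))
        (LinearMap.ker (S.Lpow L 2 (((d : ℤ) - (q - 2 * j) + 1).toNat) p (q - 2 * j))) := by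
    rw [(hprim p q).submodule_iSup_eq_top]; trivial
  refine Submodule.iSup_induction _ (motive := fun y => S.d 2 p q y = 0) hx ?_ (map_zero _) ?_
  · intro j y hy
    obtain ⟨z, hz, rfl⟩ := hy
    simp only [SetLike.mem_coe, LinearMap.mem_ker] at hz
    -- first: the differential kills the primitive element z
    have hz0 : S.d 2 p (q - 2 * j) z = 0 := by
      by_cases hq : q - 2 * (j : ℤ) ≤ d
      · -- use injectivity of L^k on degree q' - 1 = d - k
        set k' : ℕ := ((d : ℤ) - (q - 2 * j) + 1).toNat with hk'
        have hkz : (k' : ℤ) = (d : ℤ) - (q - 2 * j) + 1 :=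
          Int.toNat_of_nonneg (by linarith)
        have hdeg : q - 2 * (j : ℤ) + 1 - 2 = (d : ℤ) - k' := by rw [hkz]; ring
        apply S.Lpow_inj d L hHL k' (p + 2) _ hdeg
        rw [map_zero]
        apply S.castQ_inj 2 (p + 2)
          (show q - 2 * (j:ℤ) + 1 - 2 + 2 * k' = q - 2 * j + 2 * k' + 1 - 2 by push_cast; ring)
        rw [map_zero]
        have hc := S.dLpow L hLd k' 2 p (q - 2 * j) z
        rw [hz, map_zero] at hc
        exact hc.symm
      · -- degree too high: the primitive subspace is zero
        have h0 : ((d : ℤ) - (q - 2 * j) + 1).toNat = 0 := by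
          apply Int.toNat_of_nonpos; linarith
        rw [h0] at hz
        have hz' : S.castQ 2 p (show q - 2*(j:ℤ) = q - 2*j + 2*(0:ℕ) by push_cast; ring) z
            = 0 := hz
        have : z = 0 := by
          apply S.castQ_inj 2 p
            (show q - 2*(j:ℤ) = q - 2*j + 2*(0:ℕ) by push_cast; ring)
          rw [hz', map_zero]
        rw [this, map_zero]
    simp only [LinearMap.comp_apply]
    rw [S.d_castQ, S.dLpow L hLd, hz0, map_zero, map_zero, map_zero]
  · intro a b ha hb
    rw [map_add, ha, hb, add_zero]
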